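/- Let X be a real-valued random variable with |X − E[X]| ≤ 1 almost surely, and let λ ≥ 0. Then E[exp(λX)] ≤ exp( λ·E[X] + (e^λ − λ − 1)·Var(X) ). -/

import Mathlib

open MeasureTheory

lemma bernstein_exp_tsum (x : ℝ) : Real.exp x = ∑' n : ℕ, x ^ n / n.factorial := by
  rw [Real.exp_eq_exp_ℝ, NormedSpace.exp_eq_tsum_div]

set_option maxHeartbeats 1000000 in
lemma bernstein_pointwise {lam y : ℝ} (hlam : 0 ≤ lam) (hy : |y| ≤ 1) :
    Real.exp (lam * y) ≤ 1 + lam * y + (Real.exp lam - lam - 1) * y ^ 2 := by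
  have hs1 : Summable (fun n : ℕ => (lam * y) ^ n / n.factorial) :=
    Real.summable_pow_div_factorial _
  have hs2 : Summable (fun n : ℕ => lam ^ n / n.factorial) :=
    Real.summable_pow_div_factorial _
  have hs1' : Summable (fun n : ℕ => (lam * y) ^ (n + 2) / (n + 2).factorial) :=
    (summable_nat_add_iff 2).2 hs1
  have hs2' : Summable (fun n : ℕ => lam ^ (n + 2) / (n + 2).factorial) :=
    (summable_nat_add_iff 2).2 hs2
  have hdecomp : ∀ (x : ℝ), Real.exp x = 1 + x + ∑' n : ℕ, x ^ (n + 2) / (n + 2).factorial := by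
    intro x
    rw [bernstein_exp_tsum x, ← Summable.sum_add_tsum_nat_add 2 (Real.summable_pow_div_factorial x)]
    simp [Finset.sum_range_succ]
  have key : ∑' n : ℕ, (lam * y) ^ (n + 2) / (n + 2).factorial ≤
      ∑' n : ℕ, lam ^ (n + 2) * y ^ 2 / (n + 2).factorial := by
    refine Summable.tsum_le_tsum (fun n => ?_) hs1' ?_
    · apply div_le_div_of_nonneg_right ?_ (by positivity)
      · rw [mul_pow]
        refine mul_le_mul_of_nonneg_left ?_ (by positivity)
        calc y ^ (n + 2) ≤ |y ^ (n + 2)| := le_abs_self _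
          _ = |y| ^ (n + 2) := abs_pow _ _
          _ ≤ |y| ^ 2 := pow_le_pow_of_le_one (abs_nonneg _) hy (by omega)
          _ = y ^ 2 := sq_abs _
    · have heq : (fun n : ℕ => lam ^ (n + 2) * y ^ 2 / (n + 2).factorial)
          = fun n : ℕ => y ^ 2 * (lam ^ (n + 2) / (n + 2).factorial) := by
        funext n; ring
      rw [heq]; exact hs2'.mul_left _
  have hsum2 : ∑' n : ℕ, lam ^ (n + 2) * y ^ 2 / (n + 2).factorial
      = (Real.exp lam - lam - 1) * y ^ 2 := by
    have h := hdecomp lam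
    have : ∑' n : ℕ, lam ^ (n + 2) / (n + 2).factorial = Real.exp lam - lam - 1 := by
      linarith
    calc ∑' n : ℕ, lam ^ (n + 2) * y ^ 2 / (n + 2).factorial
        = ∑' n : ℕ, (lam ^ (n + 2) / (n + 2).factorial) * y ^ 2 := by
          congr 1; ext n; ring
      _ = (∑' n : ℕ, lam ^ (n + 2) / (n + 2).factorial) * y ^ 2 := tsum_mul_right
      _ = (Real.exp lam - lam - 1) * y ^ 2 := by rw [this]
  calc Real.exp (lam * y)
      = 1 + lam * y + ∑' n : ℕ, (lam * y) ^ (n + 2) / (n + 2).factorial := hdecomp _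
    _ ≤ 1 + lam * y + (Real.exp lam - lam - 1) * y ^ 2 := by
        rw [← hsum2]; linarith [key]

/-- **Bernstein/Bennett MGF bound.** If `X` is a real random variable with
`|X − E[X]| ≤ 1` almost surely and `λ ≥ 0`, then
`E[exp(λX)] ≤ exp(λ·E[X] + (e^λ − λ − 1)·Var(X))`. -/
theorem bernstein_mgf_bound {Ω : Type*} [MeasurableSpace Ω]
    (μ : Measure Ω) [IsProbabilityMeasure μ]
    (X : Ω → ℝ) (hmeas : Measurable X) (hint : Integrable X μ)
    (hbdd : ∀ᵐ ω ∂μ, |X ω - ∫ ω', X ω' ∂μ| ≤ 1)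
    (lam : ℝ) (hlam : 0 ≤ lam) :
    (∫ ω, Real.exp (lam * X ω) ∂μ) ≤
      Real.exp (lam * (∫ ω, X ω ∂μ) +
        (Real.exp lam - lam - 1) * ProbabilityTheory.variance X μ) := by
  set m : ℝ := ∫ ω, X ω ∂μ with hm
  set c : ℝ := Real.exp lam - lam - 1 with hc
  have hc0 : 0 ≤ c := by
    have := Real.add_one_le_exp lam
    simp only [hc]; linarith
  set Y : Ω → ℝ := fun ω => X ω - m with hY
  have hYmeas : Measurable Y := hmeas.sub measurable_const
  have hYint : Integrable Y μ := hint.sub (integrable_const m)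
  have hYmean : ∫ ω, Y ω ∂μ = 0 := by
    simp [hY, integral_sub hint (integrable_const m), measure_univ]
    exact sub_self _
  have hYsq_int : Integrable (fun ω => Y ω ^ 2) μ := by
    refine Integrable.mono' (integrable_const 1)
      ((hYmeas.pow_const 2).aestronglyMeasurable) ?_
    filter_upwards [hbdd] with ω hω
    have : |Y ω| ≤ 1 := hω
    rw [Real.norm_eq_abs, abs_of_nonneg (sq_nonneg _), ← sq_abs]
    exact pow_le_one₀ (abs_nonneg _) this
  have hmem : MemLp X 2 μ := by
    refine MemLp.of_bound hint.aestronglyMeasurable (|m| + 1) ?_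
    filter_upwards [hbdd] with ω hω
    calc ‖X ω‖ = |X ω - m + m| := by rw [Real.norm_eq_abs]; ring_nf
      _ ≤ |X ω - m| + |m| := abs_add_le _ _
      _ ≤ |m| + 1 := by linarith
  have hvar : ProbabilityTheory.variance X μ = ∫ ω, Y ω ^ 2 ∂μ := by
    rw [ProbabilityTheory.variance_eq_integral hmeas.aemeasurable]
  have hexpY_int : Integrable (fun ω => Real.exp (lam * Y ω)) μ := by
    refine Integrable.mono' (integrable_const (Real.exp lam))
      (((measurable_const.mul hYmeas).exp).aestronglyMeasurable) ?_
    filter_upwards [hbdd] with ω hω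
    rw [Real.norm_eq_abs, abs_of_pos (Real.exp_pos _), Real.exp_le_exp]
    calc lam * Y ω ≤ lam * |Y ω| := by
          exact mul_le_mul_of_nonneg_left (le_abs_self _) hlam
      _ ≤ lam * 1 := mul_le_mul_of_nonneg_left hω hlam
      _ = lam := mul_one lam
  have hrhs_int : Integrable (fun ω => 1 + lam * Y ω + c * Y ω ^ 2) μ :=
    ((integrable_const 1).add (hYint.const_mul lam)).add (hYsq_int.const_mul c)
  have step1 : ∫ ω, Real.exp (lam * Y ω) ∂μ ≤ 1 + c * ProbabilityTheory.variance X μ := by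
    calc ∫ ω, Real.exp (lam * Y ω) ∂μ
        ≤ ∫ ω, (1 + lam * Y ω + c * Y ω ^ 2) ∂μ := by
          refine integral_mono_ae hexpY_int hrhs_int ?_
          filter_upwards [hbdd] with ω hω
          exact bernstein_pointwise hlam hω
      _ = 1 + lam * ∫ ω, Y ω ∂μ + c * ∫ ω, Y ω ^ 2 ∂μ := by
          have h1 : Integrable (fun ω => 1 + lam * Y ω) μ :=
            (integrable_const 1).add (hYint.const_mul lam)
          rw [integral_add h1 (hYsq_int.const_mul c),
            integral_add (integrable_const 1) (hYint.const_mul lam),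
            integral_const_mul, integral_const_mul, integral_const]
          simp [measure_univ]
      _ = 1 + c * ProbabilityTheory.variance X μ := by rw [hYmean, hvar]; ring
  have step2 : 1 + c * ProbabilityTheory.variance X μ
      ≤ Real.exp (c * ProbabilityTheory.variance X μ) := by
    linarith [Real.add_one_le_exp (c * ProbabilityTheory.variance X μ)]
  have key : ∫ ω, Real.exp (lam * X ω) ∂μ
      = Real.exp (lam * m) * ∫ ω, Real.exp (lam * Y ω) ∂μ := by
    rw [← integral_const_mul]
    congr 1; ext ω
    rw [← Real.exp_add]
    congr 1; simp [hY]; ring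
  calc ∫ ω, Real.exp (lam * X ω) ∂μ
      = Real.exp (lam * m) * ∫ ω, Real.exp (lam * Y ω) ∂μ := key
    _ ≤ Real.exp (lam * m) * Real.exp (c * ProbabilityTheory.variance X μ) := by
        refine mul_le_mul_of_nonneg_left (le_trans step1 step2) (le_of_lt (Real.exp_pos _))
    _ = Real.exp (lam * m + c * ProbabilityTheory.variance X μ) := (Real.exp_add _ _).symm
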